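/- Let T > 0, let t satisfy 0 ≤ t ≤ T, and let λ > 0. Let μ : ℕ → ℝ with μ_k ≥ 0 for all k, and let u : ℕ → ℝ be such that ∑_k u_k^2 is summable. Then the series ∑_k exp(-2*t*μ_k) * exp(-2*T*μ_k)/(exp(-2*T*μ_k) + λ)^2 * u_k^2 is summable and its sum is at most λ^(t/T - 1) * ∑_k u_k^2. (This expresses the operator-norm bound ‖F_T (F_T* F_T + λ I)^{-1} F_t‖^2 ≤ λ^(t/T - 1) of Lemma 3.2.) -/

import Mathlib

open Real

lemma key_bound (a lam s : ℝ) (ha : 0 < a) (hlam : 0 < lam) (hs0 : 0 ≤ s) (hs1 : s ≤ 1) :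
    a ^ s * a / (a + lam) ^ 2 ≤ lam ^ (s - 1) := by
  set θ : ℝ := (s + 1) / 2 with hθ
  have hθ0 : 0 ≤ θ := by positivity
  have hθ1 : θ ≤ 1 := by rw [hθ]; linarith
  have hgm : a ^ θ * lam ^ (1 - θ) ≤ θ * a + (1 - θ) * lam :=
    Real.geom_mean_le_arith_mean2_weighted hθ0 (by linarith) ha.le hlam.le (by ring)
  have hle : a ^ θ * lam ^ (1 - θ) ≤ a + lam := by
    nlinarith [Real.rpow_nonneg ha.le θ, Real.rpow_nonneg hlam.le (1 - θ)]
  have hsq : a ^ (s + 1) * lam ^ (1 - s) ≤ (a + lam) ^ 2 := by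
    have h0 : 0 ≤ a ^ θ * lam ^ (1 - θ) := by positivity
    have := mul_self_le_mul_self h0 hle
    calc a ^ (s + 1) * lam ^ (1 - s)
        = (a ^ θ * lam ^ (1 - θ)) * (a ^ θ * lam ^ (1 - θ)) := by
          rw [show (a ^ θ * lam ^ (1 - θ)) * (a ^ θ * lam ^ (1 - θ))
              = (a ^ θ * a ^ θ) * (lam ^ (1 - θ) * lam ^ (1 - θ)) by ring,
            ← Real.rpow_add ha, ← Real.rpow_add hlam]
          congr 1 <;> congr 1 <;> rw [hθ] <;> ring
      _ ≤ (a + lam) ^ 2 := by nlinarith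
  have hpos : (0:ℝ) < (a + lam) ^ 2 := by positivity
  rw [div_le_iff₀ hpos, ← Real.rpow_add_one ha.ne' s]
  calc a ^ (s + 1) = lam ^ (s - 1) * (a ^ (s + 1) * lam ^ (1 - s)) := by
        rw [show lam ^ (s - 1) * (a ^ (s + 1) * lam ^ (1 - s))
            = a ^ (s + 1) * (lam ^ (s - 1) * lam ^ (1 - s)) by ring,
          ← Real.rpow_add hlam]
        norm_num
    _ ≤ lam ^ (s - 1) * (a + lam) ^ 2 := by
        apply mul_le_mul_of_nonneg_left hsq (Real.rpow_nonneg hlam.le _)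

/-- Operator-norm bound `‖F_T (F_T* F_T + λI)⁻¹ F_t‖² ≤ λ^(t/T - 1)` of Lemma 3.2,
in spectral form. -/
theorem stmt_3 (T t lam : ℝ) (hT : 0 < T) (ht0 : 0 ≤ t) (htT : t ≤ T) (hlam : 0 < lam)
    (mu u : ℕ → ℝ) (hmu : ∀ k, 0 ≤ mu k)
    (hu : Summable fun k => (u k) ^ 2) :
    Summable (fun k =>
      Real.exp (-2 * t * mu k) * Real.exp (-2 * T * mu k) /
        (Real.exp (-2 * T * mu k) + lam) ^ 2 * (u k) ^ 2) ∧
    ∑' k, Real.exp (-2 * t * mu k) * Real.exp (-2 * T * mu k) /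
        (Real.exp (-2 * T * mu k) + lam) ^ 2 * (u k) ^ 2
      ≤ lam ^ (t / T - 1) * ∑' k, (u k) ^ 2 := by
  have hcoef : ∀ k, Real.exp (-2 * t * mu k) * Real.exp (-2 * T * mu k) /
      (Real.exp (-2 * T * mu k) + lam) ^ 2 ≤ lam ^ (t / T - 1) := by
    intro k
    have ha : (0:ℝ) < Real.exp (-2 * T * mu k) := Real.exp_pos _
    have hexp : Real.exp (-2 * t * mu k) = Real.exp (-2 * T * mu k) ^ (t / T) := by
      rw [← Real.exp_log (Real.rpow_pos_of_pos ha (t / T)), Real.log_rpow ha,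
        Real.log_exp]
      field_simp
    rw [hexp]
    exact key_bound _ _ _ ha hlam (by positivity) (by
      rw [div_le_one hT]; exact htT)
  have hptle : ∀ k, Real.exp (-2 * t * mu k) * Real.exp (-2 * T * mu k) /
      (Real.exp (-2 * T * mu k) + lam) ^ 2 * (u k) ^ 2
      ≤ lam ^ (t / T - 1) * (u k) ^ 2 := fun k =>
    mul_le_mul_of_nonneg_right (hcoef k) (sq_nonneg _)
  have hnn : ∀ k, 0 ≤ Real.exp (-2 * t * mu k) * Real.exp (-2 * T * mu k) /
      (Real.exp (-2 * T * mu k) + lam) ^ 2 * (u k) ^ 2 := fun k => by positivity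
  have hsum : Summable (fun k =>
      Real.exp (-2 * t * mu k) * Real.exp (-2 * T * mu k) /
        (Real.exp (-2 * T * mu k) + lam) ^ 2 * (u k) ^ 2) :=
    Summable.of_nonneg_of_le hnn hptle (hu.mul_left _)
  refine ⟨hsum, ?_⟩
  calc _ ≤ ∑' k, lam ^ (t / T - 1) * (u k) ^ 2 :=
        Summable.tsum_le_tsum hptle hsum (hu.mul_left _)
    _ = lam ^ (t / T - 1) * ∑' k, (u k) ^ 2 := tsum_mul_left
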